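/- Let x ∈ L²(Ω, ℝ^m), let z_0, …, z_h be pairwise uncorrelated random vectors with z_j ∈ L²(Ω, ℝ^{q_j}), and set A_j = E_{x z_j}(E_{z_j z_j}^{1/2})^†. Then the minimal value of ‖x − Σ_{j=0}^{h} P_j z_j‖²_Ω over all P_j ∈ ℝ^{m×q_j} equals tr(E_{xx}) − Σ_{j=0}^{h} ‖A_j‖², where ‖·‖ is the Frobenius norm. -/

import Mathlib

open MeasureTheory Matrix Finset Filter

noncomputable section

/-- The covariance matrix `E_{xy}` of two random vectors. -/
def covM {Ω : Type} [MeasurableSpace Ω] (μ : Measure Ω) {m n : ℕ}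
    (x : Ω → Fin m → ℝ) (y : Ω → Fin n → ℝ) : Matrix (Fin m) (Fin n) ℝ :=
  Matrix.of fun i j => ∫ ω, x ω i * y ω j ∂μ

/-- The squared norm `‖x‖²_Ω` of a random vector. -/
def sqnormOm {Ω : Type} [MeasurableSpace Ω] (μ : Measure Ω) {m : ℕ}
    (x : Ω → Fin m → ℝ) : ℝ :=
  ∫ ω, ∑ j, (x ω j) ^ 2 ∂μ

/-- The Moore–Penrose conditions. -/
def IsMoorePenrose {m n : ℕ} (A : Matrix (Fin m) (Fin n) ℝ)
    (B : Matrix (Fin n) (Fin m) ℝ) : Prop :=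
  A * B * A = A ∧ B * A * B = B ∧ (A * B)ᵀ = A * B ∧ (B * A)ᵀ = B * A

/-- The Moore–Penrose pseudoinverse `M^†`. -/
def mpinv {m n : ℕ} (A : Matrix (Fin m) (Fin n) ℝ) : Matrix (Fin n) (Fin m) ℝ :=
  Classical.epsilon fun B => IsMoorePenrose A B

/-- The symmetric positive semidefinite square root `M^{1/2}` of a PSD matrix. -/
def msqrtM {n : ℕ} (M : Matrix (Fin n) (Fin n) ℝ) : Matrix (Fin n) (Fin n) ℝ :=
  Classical.epsilon fun S => S.PosSemidef ∧ S * S = M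

/-- Squared Frobenius norm. -/
def frobSq {m n : ℕ} (A : Matrix (Fin m) (Fin n) ℝ) : ℝ := ∑ i, ∑ j, (A i j) ^ 2

/-- `(u, v, σ)` is a singular value decomposition of `A`:
`A = ∑ k σ_k u_k v_kᵀ` with orthonormal `u`'s and `v`'s and
nonnegative singular values in decreasing order. -/
def IsSVDOf {m n : ℕ} (A : Matrix (Fin m) (Fin n) ℝ)
    (u : ℕ → Fin m → ℝ) (v : ℕ → Fin n → ℝ) (σ : ℕ → ℝ) : Prop :=
  (∀ k l, k < min m n → l < min m n → u k ⬝ᵥ u l = if k = l then (1 : ℝ) else 0) ∧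
  (∀ k l, k < min m n → l < min m n → v k ⬝ᵥ v l = if k = l then (1 : ℝ) else 0) ∧
  (∀ k, 0 ≤ σ k) ∧ Antitone σ ∧ (∀ k, min m n ≤ k → σ k = 0) ∧
  A = ∑ k ∈ Finset.range (min m n), σ k • vecMulVec (u k) (v k)


variable {Ω : Type} [MeasurableSpace Ω] {μ : Measure Ω}

lemma memL2_comp {m : ℕ} {f : Ω → Fin m → ℝ} (hf : MemLp f 2 μ) (i : Fin m) :
    MemLp (fun ω => f ω i) 2 μ :=
  (ContinuousLinearMap.proj (R := ℝ) (φ := fun _ : Fin m => ℝ) i).comp_memLp' hf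

lemma int_mul {f g : Ω → ℝ} (hf : MemLp f 2 μ) (hg : MemLp g 2 μ) :
    Integrable (fun ω => f ω * g ω) μ := by
  have h1 := (hf.add hg).integrable_sq
  have h2 := hf.integrable_sq
  have h3 := hg.integrable_sq
  have h4 := ((h1.sub h2).sub h3).const_mul (2⁻¹ : ℝ)
  refine h4.congr (Eventually.of_forall fun ω => ?_)
  simp only [Pi.sub_apply, Pi.add_apply]
  ring


lemma exists_mp {n : ℕ} (S : Matrix (Fin n) (Fin n) ℝ) (hS : S.IsHermitian) :
    ∃ B, IsMoorePenrose S B := by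
  classical
  set U : Matrix (Fin n) (Fin n) ℝ := (hS.eigenvectorUnitary : Matrix (Fin n) (Fin n) ℝ) with hUdef
  set d : Fin n → ℝ := hS.eigenvalues with hddef
  have hspec : S = U * diagonal d * star U := by
    have := hS.spectral_theorem
    rw [Unitary.conjStarAlgAut_apply] at this
    exact this
  have hUU : star U * U = 1 := Unitary.coe_star_mul_self hS.eigenvectorUnitary
  set d' : Fin n → ℝ := fun i => if d i = 0 then 0 else (d i)⁻¹ with hd'def
  have key : ∀ a b : Fin n → ℝ,
      (U * diagonal a * star U) * (U * diagonal b * star U)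
        = U * diagonal (fun i => a i * b i) * star U := by
    intro a b
    have : (U * diagonal a * star U) * (U * diagonal b * star U)
        = U * (diagonal a * (star U * U) * diagonal b) * star U := by
      noncomm_ring
    rw [this, hUU, mul_one, diagonal_mul_diagonal]
  have keyT : ∀ a : Fin n → ℝ, (U * diagonal a * star U)ᵀ = U * diagonal a * star U := by
    intro a
    have hstar : star U = Uᵀ := by
      ext i j; simp [Matrix.star_apply]
    rw [hstar, Matrix.transpose_mul, Matrix.transpose_mul, Matrix.transpose_transpose,
      Matrix.diagonal_transpose, mul_assoc]
  have hdd'd : (fun i => d i * d' i * d i) = d := by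
    funext i
    by_cases hi : d i = 0
    · simp [hd'def, hi]
    · field_simp [hd'def, hi]
      simp [hd'def, hi]
  have hd'dd' : (fun i => d' i * d i * d' i) = d' := by
    funext i
    by_cases hi : d i = 0
    · simp [hd'def, hi]
    · field_simp [hd'def, hi]
      simp [hd'def, hi]
  refine ⟨U * diagonal d' * star U, ?_, ?_, ?_, ?_⟩
  · rw [hspec, key, key]
    congr 1
    congr 1
    congr 1
  · rw [hspec, key, key]
    congr 1
    congr 1
    congr 1
  · rw [hspec, key, keyT]
  · rw [hspec, key, keyT]


section pair
variable {a b c : ℕ} {f : Ω → Fin a → ℝ} {g : Ω → Fin b → ℝ}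
  (hf : MemLp f 2 μ) (hg : MemLp g 2 μ)
  (M : Matrix (Fin c) (Fin a) ℝ) (N : Matrix (Fin c) (Fin b) ℝ)

lemma pair_ptwise (ω : Ω) : ∑ i, (M *ᵥ f ω) i * (N *ᵥ g ω) i
    = ∑ i, ∑ k, ∑ l, (M i k * N i l) * (f ω k * g ω l) := by
  refine Finset.sum_congr rfl fun i _ => ?_
  simp only [Matrix.mulVec, dotProduct, Finset.sum_mul_sum]
  exact Finset.sum_congr rfl fun k _ => Finset.sum_congr rfl fun l _ => by ring

include hf hg in
lemma pair_int : Integrable (fun ω => ∑ i, (M *ᵥ f ω) i * (N *ᵥ g ω) i) μ := by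
  have : (fun ω => ∑ i, (M *ᵥ f ω) i * (N *ᵥ g ω) i)
      = fun ω => ∑ i, ∑ k, ∑ l, (M i k * N i l) * (f ω k * g ω l) :=
    funext fun ω => pair_ptwise M N ω
  rw [this]
  refine integrable_finset_sum _ fun i _ => integrable_finset_sum _ fun k _ =>
    integrable_finset_sum _ fun l _ => ?_
  exact (int_mul (memL2_comp hf k) (memL2_comp hg l)).const_mul _

include hf hg in
lemma pair_eq : ∫ ω, ∑ i, (M *ᵥ f ω) i * (N *ᵥ g ω) i ∂μ
    = (M * covM μ f g * Nᵀ).trace := by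
  have h1 : (fun ω => ∑ i, (M *ᵥ f ω) i * (N *ᵥ g ω) i)
      = fun ω => ∑ i, ∑ k, ∑ l, (M i k * N i l) * (f ω k * g ω l) :=
    funext fun ω => pair_ptwise M N ω
  rw [h1, integral_finset_sum _ fun i _ => integrable_finset_sum _ fun k _ =>
    integrable_finset_sum _ fun l _ =>
      (int_mul (memL2_comp hf k) (memL2_comp hg l)).const_mul _]
  have h2 : ∀ i : Fin c, ∫ ω, ∑ k, ∑ l, (M i k * N i l) * (f ω k * g ω l) ∂μ
      = ∑ k, ∑ l, (M i k * N i l) * covM μ f g k l := by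
    intro i
    rw [integral_finset_sum _ fun k _ => integrable_finset_sum _ fun l _ =>
      (int_mul (memL2_comp hf k) (memL2_comp hg l)).const_mul _]
    refine Finset.sum_congr rfl fun k _ => ?_
    rw [integral_finset_sum _ fun l _ =>
      (int_mul (memL2_comp hf k) (memL2_comp hg l)).const_mul _]
    exact Finset.sum_congr rfl fun l _ => integral_const_mul _ _
  simp only [h2]
  simp only [Matrix.trace, Matrix.diag, Matrix.mul_apply, Matrix.transpose_apply,
    Finset.sum_mul, Finset.mul_sum]
  refine Finset.sum_congr rfl fun i _ => ?_
  rw [Finset.sum_comm]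
  refine Finset.sum_congr rfl fun k _ => Finset.sum_congr rfl fun l _ => by ring

end pair

section cov
variable {n : ℕ} {z : Ω → Fin n → ℝ} (hz : MemLp z 2 μ)

/-- row matrix of a vector -/
def rowM {n : ℕ} (v : Fin n → ℝ) : Matrix (Fin 1) (Fin n) ℝ := Matrix.of fun _ k => v k

include hz in
lemma quad_eq (v : Fin n → ℝ) :
    ∫ ω, (v ⬝ᵥ z ω) ^ 2 ∂μ = v ⬝ᵥ (covM μ z z *ᵥ v) := by
  have h := pair_eq (μ := μ) hz hz (rowM v) (rowM v)
  have h1 : (fun ω => ∑ i, ((rowM v) *ᵥ z ω) i * ((rowM v) *ᵥ z ω) i)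
      = fun ω => (v ⬝ᵥ z ω) ^ 2 := by
    funext ω
    simp [rowM, Matrix.mulVec, dotProduct, sq]
  rw [h1] at h
  rw [h]
  simp [rowM, Matrix.trace, Matrix.mul_apply, Matrix.mulVec, dotProduct,
    Finset.mul_sum, Finset.sum_mul]
  refine Finset.sum_congr rfl fun k _ => Finset.sum_congr rfl fun i _ => ?_
  have hsym : covM μ z z i k = covM μ z z k i := by
    simp only [covM, Matrix.of_apply]
    simp_rw [mul_comm]
  rw [hsym]
  ring

include hz in
lemma covM_posSemidef : (covM μ z z).PosSemidef := by
  refine Matrix.PosSemidef.of_dotProduct_mulVec_nonneg ?_ ?_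
  · ext i j
    simp only [Matrix.conjTranspose_apply, star_trivial, covM, Matrix.of_apply]
    simp_rw [mul_comm]
  · intro v
    rw [star_trivial]
    have h2 : dotProduct v (covM μ z z *ᵥ v) = ∫ ω, (v ⬝ᵥ z ω) ^ 2 ∂μ :=
      (quad_eq hz v).symm
    rw [h2]
    exact integral_nonneg fun ω => sq_nonneg _

include hz in
lemma kernel_ae {v : Fin n → ℝ} (hv : covM μ z z *ᵥ v = 0) :
    (fun ω => v ⬝ᵥ z ω) =ᵐ[μ] 0 := by
  have h0 : ∫ ω, (v ⬝ᵥ z ω) ^ 2 ∂μ = 0 := by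
    rw [quad_eq hz v, hv, dotProduct_zero]
  have hint : Integrable (fun ω => (v ⬝ᵥ z ω) ^ 2) μ := by
    have h := pair_int (μ := μ) hz hz (rowM v) (rowM v)
    refine h.congr (Eventually.of_forall fun ω => ?_)
    simp [rowM, Matrix.mulVec, dotProduct, sq]
  have hae : (fun ω => (v ⬝ᵥ z ω) ^ 2) =ᵐ[μ] 0 := by
    rw [← integral_eq_zero_iff_of_nonneg (fun ω => sq_nonneg _) hint] at *
    exact h0
  filter_upwards [hae] with ω hω
  have : (v ⬝ᵥ z ω) ^ 2 = 0 := by simpa using hω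
  simpa using pow_eq_zero_iff two_ne_zero |>.mp this

include hz in
lemma kernel_mat {m k : ℕ} {x : Ω → Fin m → ℝ} (hx : MemLp x 2 μ)
    {M : Matrix (Fin n) (Fin k) ℝ} (hM : covM μ z z * M = 0) :
    covM μ x z * M = 0 := by
  ext i c
  simp only [Matrix.mul_apply, Matrix.zero_apply, covM, Matrix.of_apply]
  have hv : covM μ z z *ᵥ (fun r => M r c) = 0 := by
    funext i'
    have h0 : (covM μ z z * M) i' c = (0 : Matrix (Fin n) (Fin k) ℝ) i' c := by rw [hM]
    simpa [Matrix.mul_apply, Matrix.mulVec, dotProduct] using h0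
  have hae := kernel_ae hz hv
  have key : ∀ j : Fin n, (∫ ω, x ω i * z ω j ∂μ) * M j c
      = ∫ ω, x ω i * z ω j * M j c ∂μ := fun j => (integral_mul_const _ _).symm
  rw [Finset.sum_congr rfl (fun j _ => key j),
    ← integral_finset_sum _ fun j _ => (int_mul (memL2_comp hx i) (memL2_comp hz j)).mul_const _]
  have hz0 : (fun ω => ∑ j, x ω i * z ω j * M j c) =ᵐ[μ] 0 := by
    filter_upwards [hae] with ω hω
    have hω' : (fun r => M r c) ⬝ᵥ z ω = 0 := by simpa using hω
    have h1 : ∑ j, x ω i * z ω j * M j c = x ω i * ((fun r => M r c) ⬝ᵥ z ω) := by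
      simp only [dotProduct, Finset.mul_sum]
      exact Finset.sum_congr rfl fun j _ => by ring
    simp [h1, hω']
  exact integral_eq_zero_of_ae hz0
end cov


lemma frobSq_eq_trace {m n : ℕ} (A : Matrix (Fin m) (Fin n) ℝ) :
    frobSq A = (A * Aᵀ).trace := by
  simp only [frobSq, Matrix.trace, Matrix.diag, Matrix.mul_apply, Matrix.transpose_apply, sq]

lemma frobSq_nonneg {m n : ℕ} (A : Matrix (Fin m) (Fin n) ℝ) : 0 ≤ frobSq A :=
  Finset.sum_nonneg fun _ _ => Finset.sum_nonneg fun _ _ => sq_nonneg _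

lemma expand_sq {m : ℕ} {ι : Type} [Fintype ι] (a : Fin m → ℝ) (w : ι → Fin m → ℝ) :
    ∑ i, (a i - ∑ j, w j i) ^ 2
      = (∑ i, a i * a i) - 2 * (∑ j, ∑ i, a i * w j i)
        + ∑ j, ∑ j', ∑ i, w j i * w j' i := by
  have e1 : ∑ i, a i * (∑ j, w j i) = ∑ j, ∑ i, a i * w j i := by
    simp_rw [Finset.mul_sum]
    exact Finset.sum_comm
  have e2 : ∑ i, (∑ j, w j i) * (∑ j', w j' i) = ∑ j, ∑ j', ∑ i, w j i * w j' i := by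
    simp_rw [Finset.sum_mul_sum]
    rw [Finset.sum_comm]
    exact Finset.sum_congr rfl fun j _ => Finset.sum_comm
  rw [← e1, ← e2, Finset.mul_sum, ← Finset.sum_sub_distrib, ← Finset.sum_add_distrib]
  exact Finset.sum_congr rfl fun i _ => by ring

lemma value_eq {m h : ℕ} (q : Fin (h + 1) → ℕ) (x : Ω → Fin m → ℝ)
    (z : ∀ j, Ω → Fin (q j) → ℝ)
    (hx : MemLp x 2 μ) (hz : ∀ j, MemLp (z j) 2 μ)
    (P : ∀ j, Matrix (Fin m) (Fin (q j)) ℝ) :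
    ∫ ω, ∑ i, ((x ω - ∑ j, P j *ᵥ z j ω) i) ^ 2 ∂μ
      = (covM μ x x).trace - 2 * ∑ j, (covM μ x (z j) * (P j)ᵀ).trace
        + ∑ j, ∑ j', (P j * covM μ (z j) (z j') * (P j')ᵀ).trace := by
  have hpt : (fun ω => ∑ i, ((x ω - ∑ j, P j *ᵥ z j ω) i) ^ 2)
      = fun ω => (∑ i, x ω i * x ω i)
          - 2 * (∑ j, ∑ i, x ω i * (P j *ᵥ z j ω) i)
          + ∑ j, ∑ j', ∑ i, (P j *ᵥ z j ω) i * (P j' *ᵥ z j' ω) i := by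
    funext ω
    have := expand_sq (x ω) (fun j => P j *ᵥ z j ω)
    simpa using this
  have I1 : ∀ j, Integrable (fun ω => ∑ i, x ω i * (P j *ᵥ z j ω) i) μ := by
    intro j
    have := pair_int (μ := μ) hx (hz j) (1 : Matrix (Fin m) (Fin m) ℝ) (P j)
    simpa [Matrix.one_mulVec] using this
  have I2 : ∀ j j', Integrable (fun ω => ∑ i, (P j *ᵥ z j ω) i * (P j' *ᵥ z j' ω) i) μ :=
    fun j j' => pair_int (μ := μ) (hz j) (hz j') (P j) (P j')
  have I0 : Integrable (fun ω => ∑ i, x ω i * x ω i) μ := by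
    have := pair_int (μ := μ) hx hx (1 : Matrix (Fin m) (Fin m) ℝ) (1 : Matrix (Fin m) (Fin m) ℝ)
    simpa [Matrix.one_mulVec] using this
  have IG : Integrable (fun ω => 2 * (∑ j, ∑ i, x ω i * (P j *ᵥ z j ω) i)) μ :=
    (integrable_finset_sum _ fun j _ => I1 j).const_mul 2
  have IH : Integrable (fun ω => ∑ j, ∑ j', ∑ i, (P j *ᵥ z j ω) i * (P j' *ᵥ z j' ω) i) μ :=
    integrable_finset_sum _ fun j _ => integrable_finset_sum _ fun j' _ => I2 j j'
  have ISub : Integrable (fun ω => (∑ i, x ω i * x ω i)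
      - 2 * (∑ j, ∑ i, x ω i * (P j *ᵥ z j ω) i)) μ := I0.sub IG
  rw [hpt, integral_add ISub IH, integral_sub I0 IG]
  have E0 : ∫ ω, ∑ i, x ω i * x ω i ∂μ = (covM μ x x).trace := by
    have := pair_eq (μ := μ) hx hx (1 : Matrix (Fin m) (Fin m) ℝ) (1 : Matrix (Fin m) (Fin m) ℝ)
    simpa [Matrix.one_mulVec] using this
  have E1 : ∀ j, ∫ ω, ∑ i, x ω i * (P j *ᵥ z j ω) i ∂μ = (covM μ x (z j) * (P j)ᵀ).trace := by
    intro j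
    have := pair_eq (μ := μ) hx (hz j) (1 : Matrix (Fin m) (Fin m) ℝ) (P j)
    simpa [Matrix.one_mulVec] using this
  have E2 : ∀ j j', ∫ ω, ∑ i, (P j *ᵥ z j ω) i * (P j' *ᵥ z j' ω) i ∂μ
      = (P j * covM μ (z j) (z j') * (P j')ᵀ).trace :=
    fun j j' => pair_eq (μ := μ) (hz j) (hz j') (P j) (P j')
  rw [E0, integral_const_mul, integral_finset_sum _ fun j _ => I1 j,
    integral_finset_sum _ fun j _ => integrable_finset_sum _ fun j' _ => I2 j j']
  congr 1
  · congr 2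
    exact Finset.sum_congr rfl fun j _ => E1 j
  · refine Finset.sum_congr rfl fun j _ => ?_
    rw [integral_finset_sum _ fun j' _ => I2 j j']
    exact Finset.sum_congr rfl fun j' _ => E2 j j'

/-- the minimal value of `‖x − Σ_j P_j z_j‖²_Ω` over all `P_j`
equals `tr(E_{xx}) − Σ_j ‖A_j‖²` with `A_j = E_{xz_j}(E_{z_jz_j}^{1/2})^†`. -/
theorem stmt13 {Ω : Type} [MeasurableSpace Ω] (μ : Measure Ω) [IsProbabilityMeasure μ]
    {m h : ℕ} (q : Fin (h + 1) → ℕ) (x : Ω → Fin m → ℝ)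
    (z : ∀ j, Ω → Fin (q j) → ℝ)
    (hx : MemLp x 2 μ) (hz : ∀ j, MemLp (z j) 2 μ)
    (huncorr : ∀ i j, i ≠ j → covM μ (z i) (z j) = 0)
    (A : ∀ j, Matrix (Fin m) (Fin (q j)) ℝ)
    (hA : ∀ j, A j = covM μ x (z j) * mpinv (msqrtM (covM μ (z j) (z j)))) :
    IsLeast {c : ℝ | ∃ P : ∀ j, Matrix (Fin m) (Fin (q j)) ℝ,
        c = sqnormOm μ (fun ω => x ω - ∑ j, P j *ᵥ z j ω)}
      ((covM μ x x).trace - ∑ j, frobSq (A j)) := by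
  classical
  have hEpsd : ∀ j, (covM μ (z j) (z j)).PosSemidef := fun j => covM_posSemidef (hz j)
  have hSspec : ∀ j, (msqrtM (covM μ (z j) (z j))).PosSemidef ∧
      msqrtM (covM μ (z j) (z j)) * msqrtM (covM μ (z j) (z j)) = covM μ (z j) (z j) := by
    intro j
    open scoped MatrixOrder in
    exact Classical.epsilon_spec (p := fun S => S.PosSemidef ∧ S * S = covM μ (z j) (z j))
      ⟨CFC.sqrt (covM μ (z j) (z j)), (CFC.sqrt_nonneg _).posSemidef,
        CFC.sqrt_mul_sqrt_self _ (hEpsd j).nonneg⟩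
  set C : ∀ j, Matrix (Fin m) (Fin (q j)) ℝ := fun j => covM μ x (z j) with hCdef
  set S : ∀ j, Matrix (Fin (q j)) (Fin (q j)) ℝ := fun j => msqrtM (covM μ (z j) (z j))
    with hSdef
  set B : ∀ j, Matrix (Fin (q j)) (Fin (q j)) ℝ := fun j => mpinv (S j) with hBdef
  have hBspec : ∀ j, IsMoorePenrose (S j) (B j) := fun j =>
    Classical.epsilon_spec (exists_mp (S j) (hSspec j).1.1)
  have hSsym : ∀ j, (S j)ᵀ = S j := by
    intro j
    have hh := (hSspec j).1.1
    calc (S j)ᵀ = (S j)ᴴ := by ext i k; simp [Matrix.conjTranspose_apply]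
    _ = S j := hh
  have hA' : ∀ j, A j = C j * B j := hA
  have hAS : ∀ j, A j * S j = C j := by
    intro j
    have h1 := (hBspec j).1
    have h2 : S j * (B j * S j - 1) = 0 := by
      rw [Matrix.mul_sub, Matrix.mul_one, ← Matrix.mul_assoc, h1, sub_self]
    have hN : covM μ (z j) (z j) * (B j * S j - 1) = 0 := by
      calc covM μ (z j) (z j) * (B j * S j - 1)
          = S j * (S j * (B j * S j - 1)) := by rw [← mul_assoc, (hSspec j).2]
      _ = 0 := by rw [h2, mul_zero]
    have hker := kernel_mat (hz j) hx hN
    have h3 : C j * (B j * S j) - C j = 0 := by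
      have h4 := hker
      rw [Matrix.mul_sub, Matrix.mul_one] at h4
      exact h4
    rw [hA' j, Matrix.mul_assoc]
    exact sub_eq_zero.mp h3
  have key : ∀ j (Pj : Matrix (Fin m) (Fin (q j)) ℝ),
      (Pj * covM μ (z j) (z j) * Pjᵀ).trace - 2 * (C j * Pjᵀ).trace
        = frobSq (Pj * S j - A j) - frobSq (A j) := by
    intro j Pj
    have hSS := (hSspec j).2
    have hexp : (Pj * S j - A j) * (Pj * S j - A j)ᵀ
        = Pj * (S j * S j) * Pjᵀ - Pj * S j * (A j)ᵀ - A j * (S j * Pjᵀ)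
          + A j * (A j)ᵀ := by
      rw [Matrix.transpose_sub, Matrix.transpose_mul, hSsym j, Matrix.sub_mul,
        Matrix.mul_sub, Matrix.mul_sub, ← Matrix.mul_assoc, Matrix.mul_assoc Pj]
      abel
    have ht1 : (Pj * S j * (A j)ᵀ).trace = (C j * Pjᵀ).trace := by
      rw [← Matrix.trace_transpose (Pj * S j * (A j)ᵀ)]
      have : (Pj * S j * (A j)ᵀ)ᵀ = A j * S j * Pjᵀ := by
        rw [Matrix.transpose_mul, Matrix.transpose_transpose, Matrix.transpose_mul, hSsym j,
          ← Matrix.mul_assoc]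
      rw [this, hAS j]
    have ht2 : (A j * (S j * Pjᵀ)).trace = (C j * Pjᵀ).trace := by
      rw [← Matrix.mul_assoc, hAS j]
    rw [frobSq_eq_trace, frobSq_eq_trace, hexp, hSS]
    rw [Matrix.trace_add, Matrix.trace_sub, Matrix.trace_sub, ht1, ht2]
    ring
  have hval : ∀ P : ∀ j, Matrix (Fin m) (Fin (q j)) ℝ,
      sqnormOm μ (fun ω => x ω - ∑ j, P j *ᵥ z j ω)
        = ((covM μ x x).trace - ∑ j, frobSq (A j)) + ∑ j, frobSq (P j * S j - A j) := by
    intro P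
    have h0 := value_eq (μ := μ) q x z hx hz P
    have hdiag : ∀ j, ∑ j', (P j * covM μ (z j) (z j') * (P j')ᵀ).trace
        = (P j * covM μ (z j) (z j) * (P j)ᵀ).trace := by
      intro j
      rw [Finset.sum_eq_single j]
      · intro b _ hb
        simp [huncorr j b (Ne.symm hb)]
      · intro habs
        exact absurd (Finset.mem_univ j) habs
    have h1 : sqnormOm μ (fun ω => x ω - ∑ j, P j *ᵥ z j ω)
        = (covM μ x x).trace - 2 * ∑ j, (C j * (P j)ᵀ).trace
          + ∑ j, (P j * covM μ (z j) (z j) * (P j)ᵀ).trace := by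
      rw [sqnormOm, h0]
      congr 1
      exact Finset.sum_congr rfl fun j _ => hdiag j
    rw [h1]
    have h2 : ∑ j, (P j * covM μ (z j) (z j) * (P j)ᵀ).trace
          - 2 * ∑ j, (C j * (P j)ᵀ).trace
        = ∑ j, frobSq (P j * S j - A j) - ∑ j, frobSq (A j) := by
      rw [Finset.mul_sum, ← Finset.sum_sub_distrib, ← Finset.sum_sub_distrib]
      exact Finset.sum_congr rfl fun j _ => key j (P j)
    linarith
  constructor
  · refine ⟨fun j => A j * (B j)ᵀ, ?_⟩
    have hzero : ∀ j, (A j * (B j)ᵀ) * S j - A j = 0 := by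
      intro j
      have hBS : (B j)ᵀ * S j = S j * B j := by
        calc (B j)ᵀ * S j = (B j)ᵀ * (S j)ᵀ := by rw [hSsym j]
        _ = (S j * B j)ᵀ := (Matrix.transpose_mul _ _).symm
        _ = S j * B j := (hBspec j).2.2.1
      rw [Matrix.mul_assoc, hBS, ← Matrix.mul_assoc, hAS j, ← hA' j, sub_self]
    rw [hval]
    have : ∑ j, frobSq ((fun j => A j * (B j)ᵀ) j * S j - A j) = 0 := by
      refine Finset.sum_eq_zero fun j _ => ?_
      rw [hzero j]
      simp [frobSq]
    rw [this, add_zero]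
  · rintro c ⟨P, rfl⟩
    rw [hval P]
    have hge : 0 ≤ ∑ j, frobSq (P j * S j - A j) :=
      Finset.sum_nonneg fun j _ => frobSq_nonneg _
    linarith
end
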